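/- For all values of the parameters Υ_ν, Υ_e, Υ_u, Υ_d, Υ_R ∈ ℂ, the Clifford algebra Cl_{D_F}(A_F) is contained in B: π_F(a) ∈ B and [D_F, π_F(a)] ∈ B for every a ∈ A_F. -/

import Mathlib

open Matrix ComplexConjugate

noncomputable section

/-- The internal Hilbert space of the Standard Model (one generation):
8×4 complex matrices. -/
abbrev HF : Type := Matrix (Fin 8) (Fin 4) ℂ

abbrev M8 : Type := Matrix (Fin 8) (Fin 8) ℂ
abbrev M4 : Type := Matrix (Fin 4) (Fin 4) ℂ
abbrev M3 : Type := Matrix (Fin 3) (Fin 3) ℂ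
abbrev M2 : Type := Matrix (Fin 2) (Fin 2) ℂ

/-- A 2×2 complex matrix is of quaternionic form. -/
def IsQuat (q : M2) : Prop :=
  ∃ α β : ℂ, q 0 0 = α ∧ q 0 1 = β ∧ q 1 0 = -conj β ∧ q 1 1 = conj α

/-- The block-diagonal matrix with diagonal blocks λ, conj λ, q, λ, m
(of sizes 1,1,2,1,3). -/
def Pmat (l : ℂ) (q : M2) (m : M3) : M8 :=
  Matrix.of fun i j =>
    if i = 0 ∧ j = 0 then l
    else if i = 1 ∧ j = 1 then conj l
    else if h : 2 ≤ (i : ℕ) ∧ (i : ℕ) < 4 ∧ 2 ≤ (j : ℕ) ∧ (j : ℕ) < 4 then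
      q ⟨(i : ℕ) - 2, by omega⟩ ⟨(j : ℕ) - 2, by omega⟩
    else if i = 4 ∧ j = 4 then l
    else if h : 5 ≤ (i : ℕ) ∧ 5 ≤ (j : ℕ) then
      m ⟨(i : ℕ) - 5, by have := i.isLt; omega⟩ ⟨(j : ℕ) - 5, by have := j.isLt; omega⟩
    else 0

/-- The operator ξ ↦ A ξ B on H_F. -/
def lrOp (A : M8) (B : M4) : Module.End ℂ HF where
  toFun ξ := A * ξ * B
  map_add' x y := by simp [Matrix.mul_add, Matrix.add_mul]
  map_smul' c x := by simp [Matrix.mul_smul, Matrix.smul_mul]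

/-- Left multiplication by an 8×8 matrix as an operator on H_F. -/
def lmul (A : M8) : Module.End ℂ HF where
  toFun ξ := A * ξ
  map_add' x y := Matrix.mul_add A x y
  map_smul' c x := by simp [Matrix.mul_smul]

/-- The representation π_F of A_F = ℂ ⊕ ℍ ⊕ M₃(ℂ) on H_F. -/
def piF (l : ℂ) (q : M2) (m : M3) : Module.End ℂ HF := lmul (Pmat l q m)

/-- The image π_F(A_F) as a set of operators. -/
def piFSet : Set (Module.End ℂ HF) := { T | ∃ l q m, IsQuat q ∧ T = piF l q m }

/-- The real structure J_F: ξ = [v₁; v₂] ↦ [v₂*; v₁*]. -/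
def JF (ξ : HF) : HF :=
  Matrix.of fun i j =>
    if h : (i : ℕ) < 4 then
      conj (ξ ⟨(j : ℕ) + 4, by have := j.isLt; omega⟩ ⟨(i : ℕ), h⟩)
    else
      conj (ξ ⟨(j : ℕ), by have := j.isLt; omega⟩ ⟨(i : ℕ) - 4, by have := i.isLt; omega⟩)

lemma JF_add (x y : HF) : JF (x + y) = JF x + JF y := by
  funext i j
  by_cases h : (i : ℕ) < 4 <;> simp [JF, h]

lemma JF_smul (c : ℂ) (x : HF) : JF (c • x) = conj c • JF x := by
  funext i j
  by_cases h : (i : ℕ) < 4 <;> simp [JF, h]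

/-- Conjugation T ↦ J_F ∘ T ∘ J_F, a ℂ-linear operator on H_F. -/
def conjByJ (T : Module.End ℂ HF) : Module.End ℂ HF where
  toFun ξ := JF (T (JF ξ))
  map_add' x y := by
    show JF (T (JF (x + y))) = JF (T (JF x)) + JF (T (JF y))
    rw [JF_add, map_add, JF_add]
  map_smul' c x := by
    show JF (T (JF (c • x))) = c • JF (T (JF x))
    rw [JF_smul, _root_.map_smul, JF_smul, Complex.conj_conj]

abbrev E8 (i j : Fin 8) : M8 := Matrix.single i j 1
abbrev E4 (i j : Fin 4) : M4 := Matrix.single i j 1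

def M1mat (Yν Ye YR : ℂ) : M8 :=
  conj Yν • E8 0 2 + conj Ye • E8 1 3 + Yν • E8 2 0 + Ye • E8 3 1
    + conj YR • E8 0 4 + YR • E8 4 0

def M2mat (Yu Yd : ℂ) : M8 :=
  conj Yu • E8 0 2 + conj Yd • E8 1 3 + Yu • E8 2 0 + Yd • E8 3 1

def N1mat (Yν Ye : ℂ) : M4 :=
  conj Yν • E4 0 2 + conj Ye • E4 1 3 + Yν • E4 2 0 + Ye • E4 3 1

def N2mat (Yu Yd : ℂ) : M4 :=
  conj Yu • E4 0 2 + conj Yd • E4 1 3 + Yu • E4 2 0 + Yd • E4 3 1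

/-- The internal Dirac operator D_F (one generation). -/
def DF (Yν Ye Yu Yd YR : ℂ) : Module.End ℂ HF :=
  lrOp (M1mat Yν Ye YR) (E4 0 0) + lrOp (M2mat Yu Yd) (1 - E4 0 0)
    + lrOp (E8 4 4) (N1mat Yν Ye) + lrOp (E8 5 5 + E8 6 6 + E8 7 7) (N2mat Yu Yd)

/-- Generating set of the Clifford algebra: π_F(A_F) ∪ [D_F, π_F(A_F)]. -/
def genSet (Yν Ye Yu Yd YR : ℂ) : Set (Module.End ℂ HF) :=
  piFSet ∪ { T | ∃ l q m, IsQuat q ∧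
    T = DF Yν Ye Yu Yd YR * piF l q m - piF l q m * DF Yν Ye Yu Yd YR }

/-- The Clifford algebra Cl_{D_F}(A_F). -/
def ClDF (Yν Ye Yu Yd YR : ℂ) : Subalgebra ℂ (Module.End ℂ HF) :=
  Algebra.adjoin ℂ (genSet Yν Ye Yu Yd YR)

/-- Grading χ_F. -/
def G1 : M8 := Matrix.diagonal ![1, 1, -1, -1, 0, 0, 0, 0]
def G2 : M8 := Matrix.diagonal ![0, 0, 0, 0, -1, -1, -1, -1]
def G3 : M4 := Matrix.diagonal ![1, 1, -1, -1]

def chiF : Module.End ℂ HF := lmul G1 + lrOp G2 G3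

/-- The block-diagonal 8×8 matrix diag(a, λ, m) with blocks of sizes 4, 1, 3. -/
def diagALM (a : M4) (l : ℂ) (m : M3) : M8 :=
  Matrix.of fun i j =>
    if h : (i : ℕ) < 4 ∧ (j : ℕ) < 4 then a ⟨(i : ℕ), h.1⟩ ⟨(j : ℕ), h.2⟩
    else if i = 4 ∧ j = 4 then l
    else if h : 5 ≤ (i : ℕ) ∧ 5 ≤ (j : ℕ) then
      m ⟨(i : ℕ) - 5, by have := i.isLt; omega⟩ ⟨(j : ℕ) - 5, by have := j.isLt; omega⟩
    else 0

/-- The operator ξ ↦ diag(a,λ,m) ξ e₁₁ + diag(b,λ,m) ξ (1₄ − e₁₁). -/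
def Bop (a b : M4) (l : ℂ) (m : M3) : Module.End ℂ HF :=
  lrOp (diagALM a l m) (E4 0 0) + lrOp (diagALM b l m) (1 - E4 0 0)

/-- The algebra B of Lemma (B), as a set of operators. -/
def BSet : Set (Module.End ℂ HF) := { T | ∃ a b l m, T = Bop a b l m }

/-- The commutant C_F of P(A_F) in M₈(ℂ), as a set. -/
def CFSet : Set M8 := { X | ∃ q11 q12 q21 q22 α β δ : ℂ,
  X = q11 • E8 0 0 + q12 • E8 0 4 + q21 • E8 4 0 + q22 • E8 4 4
    + α • E8 1 1 + β • (E8 2 2 + E8 3 3) + δ • (E8 5 5 + E8 6 6 + E8 7 7) }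

/-- The block-diagonal 4×4 matrix diag(λ, m). -/
def diagLM (l : ℂ) (m : M3) : M4 :=
  Matrix.of fun i j =>
    if i = 0 ∧ j = 0 then l
    else if h : 1 ≤ (i : ℕ) ∧ 1 ≤ (j : ℕ) then
      m ⟨(i : ℕ) - 1, by have := i.isLt; omega⟩ ⟨(j : ℕ) - 1, by have := j.isLt; omega⟩
    else 0

/-- The block-diagonal 4×4 matrix diag(λ, conj λ, q). -/
def diagLLQ (l : ℂ) (q : M2) : M4 :=
  Matrix.of fun i j =>
    if i = 0 ∧ j = 0 then l
    else if i = 1 ∧ j = 1 then conj l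
    else if h : 2 ≤ (i : ℕ) ∧ 2 ≤ (j : ℕ) then
      q ⟨(i : ℕ) - 2, by have := i.isLt; omega⟩ ⟨(j : ℕ) - 2, by have := j.isLt; omega⟩
    else 0

/-- E_u = diag(1₄, 0₄) ∈ M₈(ℂ). -/
def Eu : M8 := Matrix.of fun i j => if i = j ∧ (i : ℕ) < 4 then 1 else 0

/-- E_l = diag(0₄, 1₄) ∈ M₈(ℂ). -/
def El : M8 := Matrix.of fun i j => if i = j ∧ 4 ≤ (i : ℕ) then 1 else 0

/-- The block-diagonal 8×8 matrix diag(b, c) with two 4×4 blocks. -/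
def diag44 (b c : M4) : M8 :=
  Matrix.of fun i j =>
    if h : (i : ℕ) < 4 ∧ (j : ℕ) < 4 then b ⟨(i : ℕ), h.1⟩ ⟨(j : ℕ), h.2⟩
    else if h : 4 ≤ (i : ℕ) ∧ 4 ≤ (j : ℕ) then
      c ⟨(i : ℕ) - 4, by have := i.isLt; omega⟩ ⟨(j : ℕ) - 4, by have := j.isLt; omega⟩
    else 0


lemma lmul_comp_lrOp (P A : M8) (B : M4) :
    lmul P * lrOp A B = lrOp (P * A) B := by
  ext ξ : 1
  simp [lrOp, lmul, Matrix.mul_assoc]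

lemma lrOp_comp_lmul (A : M8) (B : M4) (P : M8) :
    lrOp A B * lmul P = lrOp (A * P) B := by
  ext ξ : 1
  simp [lrOp, lmul, Matrix.mul_assoc]

lemma lrOp_sub_left (A A' : M8) (B : M4) :
    lrOp A B - lrOp A' B = lrOp (A - A') B := by
  ext ξ : 1
  simp [lrOp, Matrix.sub_mul]

lemma lrOp_zero (B : M4) : lrOp 0 B = 0 := by
  ext ξ : 1
  simp [lrOp]

lemma lrOp_split (A : M8) : lrOp A (E4 0 0) + lrOp A (1 - E4 0 0) = lmul A := by
  ext ξ : 1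
  simp [lrOp, lmul, Matrix.mul_sub, Matrix.mul_one]

set_option maxHeartbeats 2000000 in
lemma Pmat_eq (l : ℂ) (q : M2) (m : M3) :
    Pmat l q m = diagALM (diagLLQ l q) l m := by
  funext i j
  fin_cases i <;> fin_cases j <;>
    simp (config := {decide := true}) [Pmat, diagALM, diagLLQ]
set_option maxHeartbeats 4000000 in
lemma comm_M1 (Yν Ye YR : ℂ) (l : ℂ) (q : M2) (m : M3) (α β : ℂ)
    (h00 : q 0 0 = α) (h01 : q 0 1 = β) (h10 : q 1 0 = -conj β) (h11 : q 1 1 = conj α) :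
    M1mat Yν Ye YR * Pmat l q m - Pmat l q m * M1mat Yν Ye YR =
      diagALM !![0, 0, conj Yν * (α - l), conj Yν * β;
                 0, 0, -(conj Ye * conj β), conj Ye * (conj α - conj l);
                 Yν * (l - α), -(Ye * β), 0, 0;
                 Yν * conj β, Ye * (conj l - conj α), 0, 0] 0 0 := by
  funext i j
  fin_cases i <;> fin_cases j <;>
    simp (config := {decide := true}) [M1mat, Pmat, diagALM, Matrix.mul_apply,
      Fin.sum_univ_succ, Matrix.single, Fin.eta, Matrix.vecHead, Matrix.vecTail,
      show ((2:Fin 8):ℕ) = 2 from rfl, show ((3:Fin 8):ℕ) = 3 from rfl,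
      show ((5:Fin 8):ℕ) = 5 from rfl, show ((6:Fin 8):ℕ) = 6 from rfl,
      show ((7:Fin 8):ℕ) = 7 from rfl, show ((2:Fin 4):ℕ) = 2 from rfl,
      show ((3:Fin 4):ℕ) = 3 from rfl,
      Fin.mk_zero, Fin.mk_one, h00, h01, h10, h11] <;> ring
set_option maxHeartbeats 4000000 in
lemma comm_M2 (Yu Yd : ℂ) (l : ℂ) (q : M2) (m : M3) (α β : ℂ)
    (h00 : q 0 0 = α) (h01 : q 0 1 = β) (h10 : q 1 0 = -conj β) (h11 : q 1 1 = conj α) :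
    M2mat Yu Yd * Pmat l q m - Pmat l q m * M2mat Yu Yd =
      diagALM !![0, 0, conj Yu * (α - l), conj Yu * β;
                 0, 0, -(conj Yd * conj β), conj Yd * (conj α - conj l);
                 Yu * (l - α), -(Yd * β), 0, 0;
                 Yu * conj β, Yd * (conj l - conj α), 0, 0] 0 0 := by
  funext i j
  fin_cases i <;> fin_cases j <;>
    simp (config := {decide := true}) [M2mat, Pmat, diagALM, Matrix.mul_apply,
      Fin.sum_univ_succ, Matrix.single, Fin.eta, Matrix.vecHead, Matrix.vecTail,
      show ((2:Fin 8):ℕ) = 2 from rfl, show ((3:Fin 8):ℕ) = 3 from rfl,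
      show ((5:Fin 8):ℕ) = 5 from rfl, show ((6:Fin 8):ℕ) = 6 from rfl,
      show ((7:Fin 8):ℕ) = 7 from rfl, show ((2:Fin 4):ℕ) = 2 from rfl,
      show ((3:Fin 4):ℕ) = 3 from rfl,
      Fin.mk_zero, Fin.mk_one, h00, h01, h10, h11] <;> ring
set_option maxHeartbeats 2000000 in
lemma comm_E44 (l : ℂ) (q : M2) (m : M3) :
    E8 4 4 * Pmat l q m - Pmat l q m * E8 4 4 = 0 := by
  funext i j
  fin_cases i <;> fin_cases j <;>
    simp (config := {decide := true}) [Pmat, Matrix.mul_apply,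
      Fin.sum_univ_succ, Matrix.single]

set_option maxHeartbeats 2000000 in
lemma comm_E567 (l : ℂ) (q : M2) (m : M3) :
    (E8 5 5 + E8 6 6 + E8 7 7) * Pmat l q m - Pmat l q m * (E8 5 5 + E8 6 6 + E8 7 7) = 0 := by
  funext i j
  fin_cases i <;> fin_cases j <;>
    simp (config := {decide := true}) [Pmat, Matrix.mul_apply,
      Fin.sum_univ_succ, Matrix.single, Fin.eta,
      show ((5:Fin 8):ℕ) = 5 from rfl, show ((6:Fin 8):ℕ) = 6 from rfl,
      show ((7:Fin 8):ℕ) = 7 from rfl]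
theorem stmt_12 (Yν Ye Yu Yd YR : ℂ) (l : ℂ) (q : M2) (m : M3) (hq : IsQuat q) :
    piF l q m ∈ BSet ∧
    DF Yν Ye Yu Yd YR * piF l q m - piF l q m * DF Yν Ye Yu Yd YR ∈ BSet := by
  obtain ⟨α, β, h00, h01, h10, h11⟩ := hq
  constructor
  · refine ⟨diagLLQ l q, diagLLQ l q, l, m, ?_⟩
    rw [Bop, lrOp_split, piF, Pmat_eq]
  · refine ⟨!![0, 0, conj Yν * (α - l), conj Yν * β;
        0, 0, -(conj Ye * conj β), conj Ye * (conj α - conj l);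
        Yν * (l - α), -(Ye * β), 0, 0;
        Yν * conj β, Ye * (conj l - conj α), 0, 0],
      !![0, 0, conj Yu * (α - l), conj Yu * β;
        0, 0, -(conj Yd * conj β), conj Yd * (conj α - conj l);
        Yu * (l - α), -(Yd * β), 0, 0;
        Yu * conj β, Yd * (conj l - conj α), 0, 0], 0, 0, ?_⟩
    rw [DF, piF, Bop]
    simp only [add_mul, mul_add, lrOp_comp_lmul, lmul_comp_lrOp]
    have key : ∀ T1 T2 T3 T4 S1 S2 S3 S4 : Module.End ℂ HF,
        T1 + T2 + T3 + T4 - (S1 + S2 + S3 + S4)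
          = (T1 - S1) + (T2 - S2) + (T3 - S3) + (T4 - S4) := by
      intros; abel
    rw [key, lrOp_sub_left, lrOp_sub_left, lrOp_sub_left, lrOp_sub_left,
      comm_M1 Yν Ye YR l q m α β h00 h01 h10 h11,
      comm_M2 Yu Yd l q m α β h00 h01 h10 h11,
      comm_E44, ← Matrix.add_mul, ← Matrix.add_mul, ← Matrix.mul_add, ← Matrix.mul_add,
      comm_E567, lrOp_zero, lrOp_zero, add_zero, add_zero]

end
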